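/- Fix an integer k ≥ 0 and rational numbers x, a. The formal power series Σ_{n=0}^∞ D_{n,k}(x,a)·zⁿ over ℚ satisfies (1 − x·z + a·z²) · Σ_{n=0}^∞ D_{n,k}(x,a)·zⁿ = (2 − k) + (k − 1)·x·z, i.e. the generating series of the Dickson polynomials of the (k+1)-th kind equals (2 − k + (k−1)xz)/(1 − xz + az²). -/

import Mathlib

/-- The `n`-th Dickson polynomial of the `(k+1)`-th kind over `ℚ`, evaluated at `x` with
parameter `a`: `D_{0,k}(x,a) = 2 − k` and, for `n ≥ 1`,
`D_{n,k}(x,a) = Σ_{i=0}^{⌊n/2⌋} ((n − k·i)/(n − i)) · C(n−i,i) · (−a)^i · x^(n−2i)`. -/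
def dicksonKindQ (k n : ℕ) (x a : ℚ) : ℚ :=
  if n = 0 then 2 - (k : ℚ)
  else ∑ i ∈ Finset.range (n / 2 + 1),
    (((n : ℚ) - (k : ℚ) * (i : ℚ)) / ((n : ℚ) - (i : ℚ))) * (Nat.choose (n - i) i : ℚ) *
      (-a) ^ i * x ^ (n - 2 * i)

namespace DicksonAux

noncomputable def c (k n i : ℕ) : ℚ :=
  (((n : ℚ) - (k : ℚ) * (i : ℚ)) / ((n : ℚ) - (i : ℚ))) * (Nat.choose (n - i) i : ℚ)

lemma key (k n i : ℕ) (hn : 1 ≤ n) (hi : 1 ≤ i) (h2 : 2 * i ≤ n + 2) :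
    c k (n+2) i = c k (n+1) i + c k n (i-1) := by
  obtain ⟨j, rfl⟩ : ∃ j, i = j + 1 := ⟨i - 1, by omega⟩
  have hin : j + 1 ≤ n := by omega
  have e1 : n + 2 - (j + 1) = (n + 1 - (j + 1)) + 1 := by omega
  have e2 : n - (j + 1 - 1) = n + 1 - (j + 1) := by omega
  have fA : ((n + 2 - (j+1)).choose (j+1) : ℚ)
      = ((n + 1 - (j+1)).choose (j+1) : ℚ) + ((n + 1 - (j+1)).choose j : ℚ) := by
    rw [e1, Nat.choose_succ_succ (n + 1 - (j+1)) j]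
    push_cast; ring
  have f2 : ((n : ℚ) + 2 - (j+1)) * ((n + 1 - (j+1)).choose j : ℚ)
      = ((j:ℚ) + 1) * ((n + 2 - (j+1)).choose (j+1) : ℚ) := by
    have h := Nat.add_one_mul_choose_eq (n + 1 - (j+1)) j
    simp -failIfUnchanged only [Nat.succ_eq_add_one] at h
    rw [e1]
    have e4 : (((n + 1 - (j+1)) + 1 : ℕ) : ℚ) = (n : ℚ) + 2 - ((j:ℚ)+1) := by
      push_cast [show j ≤ n by omega]; ring
    calc ((n : ℚ) + 2 - ((j:ℚ) + 1)) * ((n + 1 - (j + 1)).choose j : ℚ)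
        = (((n + 1 - (j+1)) + 1 : ℕ) : ℚ) * ((n + 1 - (j + 1)).choose j : ℚ) := by rw [e4]
      _ = _ := by rw [← Nat.cast_mul, h]; push_cast; ring
  have hile : ((j : ℚ) + 1) ≤ n := by exact_mod_cast hin
  have hp : ((n : ℚ) + 2 - ((j:ℚ)+1)) ≠ 0 := by linarith
  have hq : ((n : ℚ) + 1 - ((j:ℚ)+1)) ≠ 0 := by linarith
  unfold c
  simp only [Nat.add_sub_cancel, Nat.succ_sub_succ_eq_sub, Nat.sub_zero] at fA f2 ⊢
  push_cast
  rw [div_mul_eq_mul_div, div_mul_eq_mul_div, div_mul_eq_mul_div]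
  have hq' : (n : ℚ) - (j : ℚ) = (n : ℚ) + 1 - ((j:ℚ) + 1) := by ring
  rw [hq', ← add_div, div_eq_div_iff hp hq]
  linear_combination (((n:ℚ)+1-k*((j:ℚ)+1))*((n:ℚ)+2-((j:ℚ)+1))) * fA + (1-(k:ℚ)) * f2

noncomputable def T (k : ℕ) (x a : ℚ) (m i : ℕ) : ℚ := c k m i * (-a) ^ i * x ^ (m - 2 * i)

lemma dickson_eq_sum (k : ℕ) (x a : ℚ) (m N : ℕ) (hm : 1 ≤ m) (hN : m / 2 + 1 ≤ N) :
    dicksonKindQ k m x a = ∑ i ∈ Finset.range N, T k x a m i := by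
  have h0 : dicksonKindQ k m x a = ∑ i ∈ Finset.range (m / 2 + 1), T k x a m i := by
    rw [dicksonKindQ, if_neg (by omega)]; rfl
  rw [h0]
  apply Finset.sum_subset (Finset.range_subset_range.2 hN)
  intro i hi hni
  simp only [Finset.mem_range, not_lt] at hni
  have : m - i < i := by omega
  unfold T c
  rw [Nat.choose_eq_zero_of_lt this]
  simp

lemma c_zero (k m : ℕ) (hm : 1 ≤ m) : c k m 0 = 1 := by
  unfold c
  have : (m : ℚ) ≠ 0 := by exact_mod_cast Nat.one_le_iff_ne_zero.mp hm
  simp [div_self this]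

lemma recur (k : ℕ) (x a : ℚ) (n : ℕ) (hn : 1 ≤ n) :
    dicksonKindQ k (n+2) x a = x * dicksonKindQ k (n+1) x a - a * dicksonKindQ k n x a := by
  have h2 : dicksonKindQ k (n+2) x a = ∑ i ∈ Finset.range (n/2 + 2), T k x a (n+2) i :=
    dickson_eq_sum k x a (n+2) (n/2+2) (by omega) (by omega)
  have h1 : dicksonKindQ k (n+1) x a = ∑ i ∈ Finset.range (n/2 + 2), T k x a (n+1) i :=
    dickson_eq_sum k x a (n+1) (n/2+2) (by omega) (by omega)
  have h0 : dicksonKindQ k n x a = ∑ i ∈ Finset.range (n/2 + 1), T k x a n i :=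
    dickson_eq_sum k x a n (n/2+1) hn (le_refl _)
  have step : ∀ i ∈ Finset.range (n/2 + 2),
      T k x a (n+2) i = x * T k x a (n+1) i - (if i = 0 then 0 else a * T k x a n (i-1)) := by
    intro i hi
    simp only [Finset.mem_range] at hi
    rcases Nat.eq_zero_or_pos i with rfl | hipos
    · rw [if_pos rfl, sub_zero]
      unfold T
      rw [c_zero k (n+2) (by omega), c_zero k (n+1) (by omega)]
      simp only [pow_zero, one_mul, mul_one]
      rw [show n + 2 - 2 * 0 = (n + 1 - 2 * 0) + 1 by omega, pow_succ']
    · rw [if_neg (by omega)]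
      have hk := key k n i hn hipos (by omega)
      obtain ⟨j, rfl⟩ : ∃ j, i = j + 1 := ⟨i - 1, by omega⟩
      simp only [Nat.add_sub_cancel] at hk ⊢
      unfold T
      rw [hk]
      have hx : c k (n+1) (j+1) * (x * x ^ (n + 1 - 2 * (j+1)))
          = c k (n+1) (j+1) * x ^ (n + 2 - 2 * (j+1)) := by
        rcases le_or_gt (2 * (j+1)) (n+1) with h | h
        · congr 1
          rw [← pow_succ']
          congr 1
          omega
        · have hc : c k (n+1) (j+1) = 0 := by
            unfold c
            rw [Nat.choose_eq_zero_of_lt (by omega)]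
            simp
          rw [hc]; simp
      have he : n - 2 * j = n + 2 - 2 * (j + 1) := by omega
      have ha : (-a) ^ (j + 1) = -a * (-a) ^ j := by rw [pow_succ]; ring
      rw [he]
      calc (c k (n+1) (j+1) + c k n j) * (-a) ^ (j+1) * x ^ (n + 2 - 2 * (j+1))
          = c k n j * (-a) ^ (j+1) * x ^ (n + 2 - 2 * (j+1))
            + c k (n+1) (j+1) * x ^ (n + 2 - 2 * (j+1)) * (-a) ^ (j+1) := by ring
        _ = c k n j * (-a) ^ (j+1) * x ^ (n + 2 - 2 * (j+1))
            + c k (n+1) (j+1) * (x * x ^ (n + 1 - 2 * (j+1))) * (-a) ^ (j+1) := by rw [hx]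
        _ = _ := by rw [ha]; ring
  rw [h2, h1, h0, Finset.sum_congr rfl step, Finset.sum_sub_distrib, ← Finset.mul_sum]
  congr 1
  rw [show n/2 + 2 = (n/2 + 1) + 1 by omega, Finset.sum_range_succ']
  simp only [Nat.succ_ne_zero, if_neg, if_pos rfl, Nat.add_sub_cancel, add_zero, reduceIte]
  rw [← Finset.mul_sum]

lemma d_zero (k : ℕ) (x a : ℚ) : dicksonKindQ k 0 x a = 2 - k := by simp [dicksonKindQ]

lemma d_one (k : ℕ) (x a : ℚ) : dicksonKindQ k 1 x a = x := by
  norm_num [dicksonKindQ]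

lemma recur_all (k : ℕ) (x a : ℚ) (n : ℕ) :
    dicksonKindQ k (n+2) x a = x * dicksonKindQ k (n+1) x a - a * dicksonKindQ k n x a := by
  rcases Nat.eq_zero_or_pos n with rfl | hn
  · rw [d_zero, d_one]
    norm_num [dicksonKindQ, Finset.sum_range_succ]
    ring
  · exact recur k x a n hn

end DicksonAux

/-- The generating series of the Dickson polynomials of the `(k+1)`-th kind equals
`(2 − k + (k−1)xz)/(1 − xz + az²)` as a formal power series over `ℚ`. -/
theorem dicksonKind_generating_series (k : ℕ) (x a : ℚ) :
    (1 - PowerSeries.C x * PowerSeries.X + PowerSeries.C a * PowerSeries.X ^ 2) *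
        PowerSeries.mk (fun n => dicksonKindQ k n x a)
      = PowerSeries.C (2 - (k : ℚ)) + PowerSeries.C (((k : ℚ) - 1) * x) * PowerSeries.X := by
  set f : ℕ → ℚ := fun n => dicksonKindQ k n x a with hf
  have hL : (1 - PowerSeries.C x * PowerSeries.X + PowerSeries.C a * PowerSeries.X ^ 2) *
        PowerSeries.mk f
      = PowerSeries.mk f - PowerSeries.C x * (PowerSeries.mk f * PowerSeries.X ^ 1)
        + PowerSeries.C a * (PowerSeries.mk f * PowerSeries.X ^ 2) := by ring
  rw [hL]
  ext n
  simp only [map_sub, map_add, PowerSeries.coeff_mk, PowerSeries.coeff_C_mul,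
    PowerSeries.coeff_mul_X_pow', PowerSeries.coeff_C, PowerSeries.coeff_X]
  match n with
  | 0 => simp [hf, DicksonAux.d_zero]
  | 1 => simp [hf, DicksonAux.d_zero, DicksonAux.d_one]; ring
  | (n+2) =>
    have h := DicksonAux.recur_all k x a n
    simp only [hf]
    norm_num [show ¬ (n + 2 = 0) from by omega, show ¬ (n + 2 = 1) from by omega,
      show (1:ℕ) ≤ n + 2 from by omega, show (2:ℕ) ≤ n + 2 from by omega,
      show n + 2 - 1 = n + 1 from by omega]
    rw [h]
    ring
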